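/- There is an injective group homomorphism from the presented group P₆ = ⟨x, y | x⁶, y³, (xy)²⟩ into the group of affine isometries of the Euclidean plane sending x to a(v) = R_{π/3} v and y to b(v) = R_{2π/3} v + (1/2, 1/(2√3)); i.e., this assignment defines a faithful representation of π₁^orb(S²(2,3,6)) into Isom(E²). -/

import Mathlib

open Real

/-- The Euclidean plane `E²`. -/
abbrev E2 : Type := EuclideanSpace ℝ (Fin 2)

/-- The vector `(x, y)` of the Euclidean plane. -/
def vecE (x y : ℝ) : E2 := WithLp.toLp 2 ![x, y]

/-- Rotation of the Euclidean plane: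
`R_θ(x,y) = (x cos θ + y sin θ, −x sin θ + y cos θ)`. -/
noncomputable def rotE (θ : ℝ) (v : E2) : E2 :=
  vecE (v 0 * Real.cos θ + v 1 * Real.sin θ) (-v 0 * Real.sin θ + v 1 * Real.cos θ)

/-- Relators of `P₆ = ⟨x, y | x⁶, y³, (xy)²⟩`, the fundamental group of `S²(2,3,6)`. -/
def relsP6 : Set (FreeGroup (Fin 2)) :=
  {(FreeGroup.of 0) ^ 6, (FreeGroup.of 1) ^ 3, (FreeGroup.of 0 * FreeGroup.of 1) ^ 2}

/-- `P₆ = ⟨x, y | x⁶, y³, (xy)²⟩`. -/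
abbrev P6 : Type := PresentedGroup relsP6


/-! ### Auxiliary geometry lemmas -/

lemma E2ext {v w : E2} (h0 : v 0 = w 0) (h1 : v 1 = w 1) : v = w := by
  apply PiLp.ext; intro i; fin_cases i <;> assumption

@[simp] lemma vecE_zero : vecE x y 0 = x := rfl
@[simp] lemma vecE_one : vecE x y 1 = y := rfl
@[simp] lemma rotE_zero_comp (θ : ℝ) (v : E2) : rotE θ v 0 = v 0 * Real.cos θ + v 1 * Real.sin θ := rfl
@[simp] lemma rotE_one_comp (θ : ℝ) (v : E2) : rotE θ v 1 = -v 0 * Real.sin θ + v 1 * Real.cos θ := rfl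
@[simp] lemma E2_add_apply (v w : E2) (i : Fin 2) : (v + w) i = v i + w i := rfl
@[simp] lemma E2_sub_apply (v w : E2) (i : Fin 2) : (v - w) i = v i - w i := rfl
@[simp] lemma E2_neg_apply (v : E2) (i : Fin 2) : (-v) i = -(v i) := rfl
@[simp] lemma E2_zero_apply (i : Fin 2) : (0 : E2) i = 0 := rfl
@[simp] lemma E2_zsmul_apply (m : ℤ) (v : E2) (i : Fin 2) : (m • v) i = (m : ℝ) * v i := by
  simp [Pi.smul_apply]

lemma rotE_rotE (θ θ' : ℝ) (v : E2) : rotE θ (rotE θ' v) = rotE (θ' + θ) v := by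
  apply E2ext <;> simp [Real.cos_add, Real.sin_add] <;> ring

lemma rotE_zero (v : E2) : rotE 0 v = v := by
  apply E2ext <;> simp

lemma rotE_two_pi (v : E2) : rotE (2*π) v = v := by
  apply E2ext <;> simp [Real.cos_two_pi, Real.sin_two_pi]

@[simp] lemma rotE_zero_vec (θ : ℝ) : rotE θ 0 = 0 := by
  apply E2ext <;> simp

lemma rotE_add (θ : ℝ) (u v : E2) : rotE θ (u + v) = rotE θ u + rotE θ v := by
  apply E2ext <;> simp <;> ring

lemma rotE_neg (θ : ℝ) (v : E2) : rotE θ (-v) = -(rotE θ v) := by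
  apply E2ext <;> simp <;> ring

lemma rotE_dist (θ : ℝ) (u v : E2) : dist (rotE θ u) (rotE θ v) = dist u v := by
  rw [EuclideanSpace.dist_eq, EuclideanSpace.dist_eq, Fin.sum_univ_two, Fin.sum_univ_two]
  congr 1
  simp only [rotE_zero_comp, rotE_one_comp, Real.dist_eq, sq_abs]
  nlinarith [Real.sin_sq_add_cos_sq θ]

noncomputable def isoOf (θ : ℝ) (d : E2) : E2 ≃ᵢ E2 where
  toEquiv :=
  { toFun := fun v => rotE θ v + d
    invFun := fun v => rotE (-θ) (v - d)
    left_inv := fun v => by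
      show rotE (-θ) (rotE θ v + d - d) = v
      have h : rotE θ v + d - d = rotE θ v := by abel
      rw [h, rotE_rotE]
      simpa using rotE_zero v
    right_inv := fun v => by
      show rotE θ (rotE (-θ) (v - d)) + d = v
      have h : rotE θ (rotE (-θ) (v - d)) = v - d := by
        rw [rotE_rotE]; simpa using rotE_zero (v - d)
      rw [h]; abel }
  isometry_toFun := Isometry.of_dist_eq fun u v => by
    simp only [Equiv.coe_fn_mk, dist_add_right]
    exact rotE_dist θ u v

@[simp] lemma isoOf_apply (θ : ℝ) (d v : E2) : isoOf θ d v = rotE θ v + d := rfl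

lemma isoOf_mul (θ θ' : ℝ) (d d' : E2) :
    isoOf θ d * isoOf θ' d' = isoOf (θ' + θ) (rotE θ d' + d) := by
  apply IsometryEquiv.ext
  intro v
  simp only [IsometryEquiv.mul_apply, isoOf_apply, rotE_add, rotE_rotE]
  abel

lemma isoOf_one : isoOf 0 0 = 1 := by
  apply IsometryEquiv.ext
  intro v
  simp [rotE_zero]

lemma isoOf_inv (θ : ℝ) (d : E2) : (isoOf θ d)⁻¹ = isoOf (-θ) (-(rotE (-θ) d)) := by
  rw [inv_eq_iff_mul_eq_one, isoOf_mul]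
  rw [rotE_neg, rotE_rotE]
  have h1 : rotE (-θ + θ) d = d := by simpa using rotE_zero d
  rw [h1]
  have h2 : -d + d = (0 : E2) := by abel
  rw [h2]
  simpa using isoOf_one

lemma isoOf_rot_mul (θ θ' : ℝ) : isoOf θ 0 * isoOf θ' 0 = isoOf (θ' + θ) 0 := by
  rw [isoOf_mul, rotE_zero_vec, add_zero]

lemma isoOf_rot_inv (θ : ℝ) : (isoOf θ 0)⁻¹ = isoOf (-θ) 0 := by
  rw [isoOf_inv, rotE_zero_vec, neg_zero]

lemma isoOf_rot_zpow (θ : ℝ) (k : ℤ) : (isoOf θ 0)^k = isoOf (k*θ) 0 := by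
  induction k using Int.induction_on with
  | zero => simpa using isoOf_one.symm
  | succ n ih =>
      rw [zpow_add_one, ih, isoOf_rot_mul]
      congr 1
      push_cast; ring
  | pred n ih =>
      rw [zpow_sub_one, ih, isoOf_rot_inv, isoOf_mul, rotE_zero_vec, add_zero]
      congr 1
      push_cast; ring

lemma isoOf_trans_mul (d d' : E2) : isoOf 0 d * isoOf 0 d' = isoOf 0 (d' + d) := by
  rw [isoOf_mul, rotE_zero, add_zero]

lemma isoOf_trans_inv (d : E2) : (isoOf 0 d)⁻¹ = isoOf 0 (-d) := by
  rw [isoOf_inv, neg_zero, rotE_zero]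

lemma isoOf_trans_zpow (d : E2) (m : ℤ) : (isoOf 0 d)^m = isoOf 0 (m • d) := by
  induction m using Int.induction_on with
  | zero => simpa using isoOf_one.symm
  | succ n ih =>
      rw [zpow_add_one, ih, isoOf_trans_mul]
      congr 1
      push_cast [add_smul]
      abel
  | pred n ih =>
      rw [zpow_sub_one, ih, isoOf_trans_inv, isoOf_trans_mul]
      congr 1
      push_cast [sub_smul]
      abel

noncomputable def cvec : E2 := vecE (1/2) (1/(2*Real.sqrt 3))

lemma cos_two_pi_div_three : Real.cos (2*π/3) = -(1/2) := by
  rw [show (2*π/3 : ℝ) = π - π/3 by ring, Real.cos_pi_sub, Real.cos_pi_div_three]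

lemma sin_two_pi_div_three : Real.sin (2*π/3) = Real.sqrt 3/2 := by
  rw [show (2*π/3 : ℝ) = π - π/3 by ring, Real.sin_pi_sub, Real.sin_pi_div_three]

lemma sqrt3_pos : (0:ℝ) < Real.sqrt 3 := Real.sqrt_pos.2 (by norm_num)
lemma sqrt3_sq : Real.sqrt 3 * Real.sqrt 3 = 3 := Real.mul_self_sqrt (by norm_num)

lemma isoOf_two_pi : isoOf (2*π) 0 = 1 := by
  apply IsometryEquiv.ext
  intro v
  simp [rotE_two_pi]

lemma pow_two_expand {G : Type*} [Group G] (g : G) : g^2 = g*g := by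
  rw [show (2:ℕ) = 1+1 from rfl, pow_succ', pow_one]

lemma pow_three_expand {G : Type*} [Group G] (g : G) : g^3 = g*(g*g) := by
  rw [show (3:ℕ) = 2+1 from rfl, pow_succ', pow_two_expand]

lemma pow_six_expand {G : Type*} [Group G] (g : G) : g^6 = g*(g*(g*(g*(g*g)))) := by
  rw [show (6:ℕ) = 5+1 from rfl, pow_succ', show (5:ℕ) = 4+1 from rfl, pow_succ',
    show (4:ℕ) = 3+1 from rfl, pow_succ', pow_three_expand]

lemma sqrt3_inv : (1/(2*Real.sqrt 3) : ℝ) = Real.sqrt 3/6 := by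
  rw [div_eq_div_iff (by positivity) (by norm_num)]
  nlinarith [sqrt3_sq]

lemma sqrt3_inv' : (Real.sqrt 3)⁻¹ = Real.sqrt 3/3 := by
  rw [inv_eq_one_div, div_eq_div_iff (ne_of_gt sqrt3_pos) (by norm_num : (3:ℝ) ≠ 0)]
  nlinarith [sqrt3_sq]

lemma rel_a : isoOf (π/3) 0 ^ 6 = 1 := by
  rw [pow_six_expand, isoOf_rot_mul, isoOf_rot_mul, isoOf_rot_mul, isoOf_rot_mul, isoOf_rot_mul,
    show (π/3+π/3+π/3+π/3+π/3+π/3 : ℝ) = 2*π by ring, isoOf_two_pi]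

lemma rel_b : isoOf (2*π/3) cvec ^ 3 = 1 := by
  rw [pow_three_expand, isoOf_mul, isoOf_mul]
  have hang : (2*π/3+2*π/3+2*π/3 : ℝ) = 2*π := by ring
  have htr : rotE (2*π/3) (rotE (2*π/3) cvec + cvec) + cvec = 0 := by
    apply E2ext
    · simp [cvec, sqrt3_inv, sqrt3_inv', cos_two_pi_div_three, sin_two_pi_div_three]
      linear_combination (-(1/8) : ℝ) * sqrt3_sq
    · simp [cvec, sqrt3_inv, sqrt3_inv', cos_two_pi_div_three, sin_two_pi_div_three]
      linear_combination (-(Real.sqrt 3)/24) * sqrt3_sq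
  rw [hang, htr, isoOf_two_pi]

lemma rel_ab : (isoOf (π/3) 0 * isoOf (2*π/3) cvec) ^ 2 = 1 := by
  rw [pow_two_expand, isoOf_mul, isoOf_mul]
  have hang : (2*π/3+π/3+(2*π/3+π/3) : ℝ) = 2*π := by ring
  have htr : rotE (2*π/3+π/3) (rotE (π/3) cvec + 0) + (rotE (π/3) cvec + 0) = 0 := by
    apply E2ext <;>
      simp [cvec, Real.cos_pi_div_three, Real.sin_pi_div_three,
        show (2*π/3+π/3 : ℝ) = π by ring, Real.cos_pi, Real.sin_pi] <;>
      ring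
  rw [hang, htr, isoOf_two_pi]

/-! ### Auxiliary group-theoretic lemmas -/

lemma pow_three_expand' {G : Type*} [Group G] (g : G) : g^3 = g*(g*g) := by
  rw [show (3:ℕ) = 2+1 from rfl, pow_succ', show (2:ℕ) = 1+1 from rfl, pow_succ', pow_one]

namespace P6aux

def X : P6 := PresentedGroup.of 0
def Y : P6 := PresentedGroup.of 1
def s : P6 := X * Y
def U : P6 := Y * X⁻¹ * X⁻¹
def W : P6 := X * U * X⁻¹

lemma mk_rel {r : FreeGroup (Fin 2)} (hr : r ∈ relsP6) : PresentedGroup.mk relsP6 r = 1 :=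
  (QuotientGroup.eq_one_iff _).2 (Subgroup.subset_normalClosure hr)

lemma h6 : X^6 = 1 := by
  have : (X : P6)^6 = PresentedGroup.mk relsP6 ((FreeGroup.of 0)^6) := by
    rw [map_pow]; rfl
  rw [this]
  exact mk_rel (by simp [relsP6])

lemma h3 : Y^3 = 1 := by
  have : (Y : P6)^3 = PresentedGroup.mk relsP6 ((FreeGroup.of 1)^3) := by
    rw [map_pow]; rfl
  rw [this]
  exact mk_rel (by simp [relsP6])

lemma h2 : s * s = 1 := by
  have : (s * s : P6) = PresentedGroup.mk relsP6 ((FreeGroup.of 0 * FreeGroup.of 1)^2) := by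
    rw [map_pow, map_mul]
    show s * s = (X * Y)^2
    rw [s, sq]
  rw [this]
  exact mk_rel (by simp [relsP6])

lemma hY : Y = X⁻¹ * s := by rw [s]; group

lemma hU : U = X⁻¹ * s * X⁻¹ * X⁻¹ := by rw [U, hY]

lemma hW : W = s * X⁻¹ * X⁻¹ * X⁻¹ := by rw [W, hU]; group

lemma hsinv : s⁻¹ = s := by
  rw [inv_eq_iff_mul_eq_one]; exact h2

lemma hK : s * X⁻¹ * s = X * s * X := by
  have h := h3
  rw [hY] at h
  -- (X⁻¹ s)^3 = 1
  rw [pow_three_expand'] at h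
  have h' : X⁻¹ * s * (X⁻¹ * s) * (X⁻¹ * s) = 1 := by
    rw [← h]; group
  -- multiply left by X, right by s⁻¹
  have : s * X⁻¹ * s * (X⁻¹ * s) = X := by
    calc s * X⁻¹ * s * (X⁻¹ * s) = X * (X⁻¹ * s * (X⁻¹ * s) * (X⁻¹ * s)) := by group
    _ = X := by rw [h']; group
  calc s * X⁻¹ * s = s * X⁻¹ * s * (X⁻¹ * s) * s⁻¹ * X := by group
  _ = X * s⁻¹ * X := by rw [this]
  _ = X * s * X := by rw [hsinv]

-- s X⁻¹ X⁻¹ s = X s X X s X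
lemma hK2 : s * (X⁻¹ * X⁻¹) * s = X*s*X * (X*s*X) := by
  have h1 : s * (X⁻¹ * X⁻¹) * s = (s * X⁻¹ * s) * (s * X⁻¹ * s) := by
    have : (s * X⁻¹ * s) * (s * X⁻¹ * s) = s * X⁻¹ * (s * s) * X⁻¹ * s := by group
    rw [this, h2]; group
  rw [h1, hK]

lemma hX4 : (X⁻¹ * X⁻¹ * X⁻¹ * X⁻¹ : P6) = X * X := by
  have : (X⁻¹ * X⁻¹ * X⁻¹ * X⁻¹ : P6) = (X * X) * (X^6)⁻¹ := by group
  rw [this, h6]; group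

lemma comm : U * W = W * U := by
  rw [hU, hW]
  calc (X⁻¹ * s * X⁻¹ * X⁻¹) * (s * X⁻¹ * X⁻¹ * X⁻¹)
      = X⁻¹ * (s * (X⁻¹ * X⁻¹) * s) * (X⁻¹ * X⁻¹ * X⁻¹) := by group
    _ = X⁻¹ * (X*s*X * (X*s*X)) * (X⁻¹ * X⁻¹ * X⁻¹) := by rw [hK2]
    _ = s * (X * X) * s * (X⁻¹ * X⁻¹) := by group
    _ = s * (X⁻¹ * X⁻¹ * X⁻¹ * X⁻¹) * s * (X⁻¹ * X⁻¹) := by rw [hX4]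
    _ = (s * X⁻¹ * X⁻¹ * X⁻¹) * (X⁻¹ * s * X⁻¹ * X⁻¹) := by group

lemma conj1 : X * U * X⁻¹ = W := rfl

lemma conj2 : X * W * X⁻¹ = W * U⁻¹ := by
  rw [hU, hW]
  calc X * (s * X⁻¹ * X⁻¹ * X⁻¹) * X⁻¹
      = X * s * (X⁻¹ * X⁻¹ * X⁻¹ * X⁻¹) := by group
    _ = X * s * (X * X) := by rw [hX4]
    _ = (X * s * X) * X := by group
    _ = (s * X⁻¹ * s) * X := by rw [← hK]
    _ = s * X⁻¹ * s⁻¹ * X := by rw [hsinv]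
    _ = (s * X⁻¹ * X⁻¹ * X⁻¹) * (X⁻¹ * s * X⁻¹ * X⁻¹)⁻¹ := by group

end P6aux

namespace P6aux

lemma commUW : Commute U W := comm

lemma conj2' : X⁻¹ * W * X = U := by rw [← conj1]; group

lemma conj1' : X⁻¹ * U * X = W⁻¹ * U := by
  have h : X * (W⁻¹ * U) * X⁻¹ = U := by
    calc X * (W⁻¹ * U) * X⁻¹ = (X * W * X⁻¹)⁻¹ * (X * U * X⁻¹) := by group
    _ = (W * U⁻¹)⁻¹ * W := by rw [conj2, conj1]
    _ = U := by group
  have h2 : X⁻¹ * (X * (W⁻¹ * U) * X⁻¹) * X = X⁻¹ * U * X := by rw [h]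
  rw [← h2]; group

lemma e1 (m : ℤ) : X * U^m * X⁻¹ = W^m := by
  have := map_zpow (MulAut.conj X) U m
  simp only [MulAut.conj_apply] at this
  rw [this, conj1]

lemma e2 (n : ℤ) : X * W^n * X⁻¹ = W^n * U^(-n) := by
  have := map_zpow (MulAut.conj X) W n
  simp only [MulAut.conj_apply] at this
  rw [this, conj2, (commUW.symm.inv_right).mul_zpow, inv_zpow, zpow_neg]

lemma e1' (m : ℤ) : X⁻¹ * U^m * X = W^(-m) * U^m := by
  have := map_zpow (MulAut.conj X⁻¹) U m
  simp only [MulAut.conj_apply, inv_inv] at this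
  rw [this, conj1', (commUW.symm.inv_left).mul_zpow, inv_zpow, zpow_neg]

lemma e2' (n : ℤ) : X⁻¹ * W^n * X = U^n := by
  have := map_zpow (MulAut.conj X⁻¹) W n
  simp only [MulAut.conj_apply, inv_inv] at this
  rw [this, conj2']

def NF (g : P6) : Prop := ∃ m n k : ℤ, g = U^m * W^n * X^k

lemma NF_one : NF 1 := ⟨0, 0, 0, by simp⟩

lemma NF_X {g : P6} (h : NF g) : NF (X * g) := by
  obtain ⟨m, n, k, rfl⟩ := h
  refine ⟨-n, m + n, k + 1, ?_⟩
  have step : X * (U^m * W^n * X^k) = (X * U^m * X⁻¹) * ((X * W^n * X⁻¹) * X^(k+1)) := by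
    group
  rw [step, e1, e2]
  have c : W^(m+n) * U^(-n) = U^(-n) * W^(m+n) := (commUW.symm.zpow_zpow (m+n) (-n)).eq
  calc W^m * (W^n * U^(-n) * X^(k+1)) = (W^(m+n) * U^(-n)) * X^(k+1) := by group
  _ = U^(-n) * W^(m+n) * X^(k+1) := by rw [c]

lemma NF_Xinv {g : P6} (h : NF g) : NF (X⁻¹ * g) := by
  obtain ⟨m, n, k, rfl⟩ := h
  refine ⟨m + n, -m, k - 1, ?_⟩
  have step : X⁻¹ * (U^m * W^n * X^k) = (X⁻¹ * U^m * X) * ((X⁻¹ * W^n * X) * X^(k-1)) := by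
    group
  rw [step, e1', e2']
  have c : W^(-m) * U^(m+n) = U^(m+n) * W^(-m) := (commUW.symm.zpow_zpow (-m) (m+n)).eq
  calc W^(-m) * U^m * (U^n * X^(k-1)) = (W^(-m) * U^(m+n)) * X^(k-1) := by group
  _ = U^(m+n) * W^(-m) * X^(k-1) := by rw [c]

lemma NF_U {g : P6} (h : NF g) : NF (U * g) := by
  obtain ⟨m, n, k, rfl⟩ := h
  exact ⟨m + 1, n, k, by group⟩

lemma NF_Uinv {g : P6} (h : NF g) : NF (U⁻¹ * g) := by
  obtain ⟨m, n, k, rfl⟩ := h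
  exact ⟨m - 1, n, k, by group⟩

lemma hY2 : Y = U * (X * X) := by show Y = (Y * X⁻¹ * X⁻¹) * (X * X); group

lemma NF_Y {g : P6} (h : NF g) : NF (Y * g) := by
  have : Y * g = U * (X * (X * g)) := by rw [hY2]; group
  rw [this]
  exact NF_U (NF_X (NF_X h))

lemma NF_Yinv {g : P6} (h : NF g) : NF (Y⁻¹ * g) := by
  have : Y⁻¹ * g = X⁻¹ * (X⁻¹ * (U⁻¹ * g)) := by rw [hY2]; group
  rw [this]
  exact NF_Xinv (NF_Xinv (NF_Uinv h))

lemma NF_all (g : P6) : NF g := by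
  have key : ∀ z : FreeGroup (Fin 2), ∀ h : P6, NF h → NF (PresentedGroup.mk relsP6 z * h) := by
    intro z
    induction z using FreeGroup.induction_on with
    | C1 => intro h hh; simpa using hh
    | of x =>
        intro h hh
        match x with
        | 0 => exact NF_X hh
        | 1 => exact NF_Y hh
    | inv_of x ih =>
        intro h hh
        rw [map_inv]
        match x with
        | 0 => exact NF_Xinv hh
        | 1 => exact NF_Yinv hh
    | mul z w ihz ihw =>
        intro h hh
        rw [map_mul, mul_assoc]
        exact ihz _ (ihw _ hh)
  induction g using PresentedGroup.induction_on with
  | _ z =>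
      have := key z 1 NF_one
      simpa using this

end P6aux

/-! ### Extra lemmas for the main proof -/

lemma wv0 : (rotE (π/3) cvec) 0 = 1/2 := by
  simp [cvec, sqrt3_inv, sqrt3_inv', Real.cos_pi_div_three, Real.sin_pi_div_three]
  linear_combination (1/12 : ℝ) * sqrt3_sq

lemma wv1 : (rotE (π/3) cvec) 1 = -(Real.sqrt 3/6) := by
  simp [cvec, sqrt3_inv, sqrt3_inv', Real.cos_pi_div_three, Real.sin_pi_div_three]
  ring

lemma cvec0 : cvec 0 = 1/2 := rfl
lemma cvec1 : cvec 1 = Real.sqrt 3/6 := by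
  show (1/(2*Real.sqrt 3) : ℝ) = _
  exact sqrt3_inv

/-- There is an injective (i.e. faithful) homomorphism `P₆ → Isom(E²)` sending the
generator `x` to `a(v) = R_{π/3} v` and the generator `y` to
`b(v) = R_{2π/3} v + (1/2, 1/(2√3))`. -/
theorem stmt2 :
    ∃ φ : P6 →* (E2 ≃ᵢ E2),
      Function.Injective φ ∧
      (∀ v : E2, φ (PresentedGroup.of 0) v = rotE (π / 3) v) ∧
      (∀ v : E2, φ (PresentedGroup.of 1) v
          = rotE (2 * π / 3) v + vecE (1 / 2) (1 / (2 * Real.sqrt 3))) := by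
  classical
  set f : Fin 2 → (E2 ≃ᵢ E2) := ![isoOf (π/3) 0, isoOf (2*π/3) cvec] with hf
  have hf0 : f 0 = isoOf (π/3) 0 := rfl
  have hf1 : f 1 = isoOf (2*π/3) cvec := rfl
  have hrels : ∀ r ∈ relsP6, FreeGroup.lift f r = 1 := by
    intro r hr
    simp only [relsP6, Set.mem_insert_iff, Set.mem_singleton_iff] at hr
    rcases hr with rfl | rfl | rfl
    · rw [map_pow, FreeGroup.lift_apply_of, hf0]
      exact rel_a
    · rw [map_pow, FreeGroup.lift_apply_of, hf1]
      exact rel_b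
    · rw [map_pow, map_mul, FreeGroup.lift_apply_of, FreeGroup.lift_apply_of, hf0, hf1]
      exact rel_ab
  set φ : P6 →* (E2 ≃ᵢ E2) := PresentedGroup.toGroup hrels with hφ
  have hφX : φ (PresentedGroup.of 0) = isoOf (π/3) 0 := by
    rw [hφ, PresentedGroup.toGroup.of, hf0]
  have hφY : φ (PresentedGroup.of 1) = isoOf (2*π/3) cvec := by
    rw [hφ, PresentedGroup.toGroup.of, hf1]
  have hφX' : φ P6aux.X = isoOf (π/3) 0 := hφX
  have hφY' : φ P6aux.Y = isoOf (2*π/3) cvec := hφY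
  have hφU : φ P6aux.U = isoOf 0 cvec := by
    have h1 : φ P6aux.U = φ P6aux.Y * (φ P6aux.X)⁻¹ * (φ P6aux.X)⁻¹ := by
      show φ (P6aux.Y * P6aux.X⁻¹ * P6aux.X⁻¹) = _
      rw [map_mul, map_mul, map_inv]
    rw [h1, hφX', hφY', isoOf_rot_inv]
    simp only [isoOf_mul, rotE_zero_vec, zero_add, add_zero]
    congr 1
    ring
  have hφW : φ P6aux.W = isoOf 0 (rotE (π/3) cvec) := by
    have h1 : φ P6aux.W = φ P6aux.X * φ P6aux.U * (φ P6aux.X)⁻¹ := by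
      show φ (P6aux.X * P6aux.U * P6aux.X⁻¹) = _
      rw [map_mul, map_mul, map_inv]
    rw [h1, hφX', hφU, isoOf_rot_inv]
    simp only [isoOf_mul, rotE_zero_vec, zero_add, add_zero]
    congr 1
    ring
  refine ⟨φ, ?_, ?_, ?_⟩
  · rw [injective_iff_map_eq_one]
    intro g hg
    obtain ⟨m, n, k, rfl⟩ := P6aux.NF_all g
    rw [map_mul, map_mul, map_zpow, map_zpow, map_zpow, hφU, hφW, hφX',
      isoOf_trans_zpow, isoOf_trans_zpow, isoOf_rot_zpow, isoOf_trans_mul,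
      isoOf_mul] at hg
    simp only [rotE_zero, rotE_zero_vec, zero_add, add_zero] at hg
    -- hg : isoOf (k*(π/3)) (n • rotE (π/3) cvec + m • cvec) = 1
    have h0 : (n • rotE (π/3) cvec + m • cvec : E2) = 0 := by
      have := congrArg (fun (e : E2 ≃ᵢ E2) => e 0) hg
      simpa [isoOf_apply] using this
    have hc0 := congrArg (fun (v : E2) => v 0) h0
    simp only [E2_add_apply, E2_zsmul_apply, E2_zero_apply, wv0, cvec0] at hc0
    have hc1 := congrArg (fun (v : E2) => v 1) h0
    simp only [E2_add_apply, E2_zsmul_apply, E2_zero_apply, wv1, cvec1] at hc1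
    have hmn : ((m:ℝ) - n) * (Real.sqrt 3/6) = 0 := by linarith
    have hmn' : (m:ℝ) = (n:ℝ) := by
      rcases mul_eq_zero.1 hmn with h | h
      · linarith
      · exfalso
        have := sqrt3_pos
        rw [div_eq_zero_iff] at h
        rcases h with h | h <;> linarith
    have hm0 : (m:ℝ) = 0 := by linarith
    have hn0 : (n:ℝ) = 0 := by linarith
    have hm : m = 0 := by exact_mod_cast hm0
    have hn : n = 0 := by exact_mod_cast hn0
    subst hm hn
    simp only [zpow_zero, one_mul, zero_smul, zero_add] at hg ⊢
    -- hg : isoOf (k*(π/3)) 0 = 1 (after simp)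
    have hcos : Real.cos ((k:ℝ)*(π/3)) = 1 := by
      have := congrArg (fun (e : E2 ≃ᵢ E2) => (e (vecE 1 0)) 0) hg
      simpa [isoOf_apply] using this
    obtain ⟨j, hj⟩ := (Real.cos_eq_one_iff _).1 hcos
    have hk : k = 6*j := by
      have hπ := Real.pi_ne_zero
      have : ((k:ℝ) - 6*j) * π = 0 := by linarith
      rcases mul_eq_zero.1 this with h | h
      · have : (k:ℝ) = ((6*j : ℤ):ℝ) := by push_cast; linarith
        exact_mod_cast this
      · exact absurd h hπ
    subst hk
    rw [zpow_mul]
    have h6' : (P6aux.X : P6)^(6:ℤ) = 1 := by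
      rw [show ((6:ℤ)) = ((6:ℕ):ℤ) by norm_num, zpow_natCast]
      exact P6aux.h6
    rw [h6', one_zpow]
  · intro v
    rw [hφX, isoOf_apply, add_zero]
  · intro v
    rw [hφY, isoOf_apply]
    rfl
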